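/- Let u : M → ℝ ∪ {±∞} and suppose there exist x₀, y₀ ∈ M and t₀ > 0 such that u(x₀) and T_{t₀}u(y₀) are both finite and T_{t₀}u(y₀) = u(x₀) + c_{t₀}(x₀,y₀). If γ : [0,t₀] → M satisfies c_{t₀}(x₀,y₀) = c_s(x₀,γ(s)) + c_{t-s}(γ(s),γ(t)) + c_{t₀-t}(γ(t),y₀) for all 0 ≤ s ≤ t ≤ t₀ (i.e., γ is a minimizer from x₀ to y₀), then for all 0 ≤ s ≤ t ≤ t₀ one has T_t u(γ(t)) = T_s u(γ(s)) + c_{t-s}(γ(s),γ(t)); that is, γ is Tu-calibrated. -/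

import Mathlib

noncomputable section

open scoped Classical

/-- Addition of extended reals with the convention `-∞ + ∞ := +∞`. -/
def laxAdd (a b : EReal) : EReal := if a = ⊥ ∧ b = ⊤ then ⊤ else a + b

/-- The forward Lax–Oleinik operator `T_t u(x) = inf_y (u(y) + c_t(y,x))`
(convention `-∞ + ∞ := +∞`), with `T_0 u := u`. -/
def laxT {M : Type*} (c : ℝ → M → M → EReal) (t : ℝ) (u : M → EReal) (x : M) : EReal :=
  if t = 0 then u x else ⨅ y : M, laxAdd (u y) (c t y x)

lemma laxAdd_of_ne_bot {a b : EReal} (h : a ≠ ⊥) : laxAdd a b = a + b := by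
  simp [laxAdd, h]

lemma exists_real_piece {a : EReal} (h0 : 0 ≤ a) (ht : a ≠ ⊤) :
    ∃ r : ℝ, 0 ≤ r ∧ a = (r : EReal) := by
  refine ⟨a.toReal, ?_, (EReal.coe_toReal ht (by rintro rfl; simp at h0)).symm⟩
  have := EReal.coe_toReal ht (show a ≠ ⊥ by rintro rfl; simp at h0)
  exact_mod_cast this ▸ h0

/-- Suppose `u(x₀)` and `T_{t₀}u(y₀)` are finite with
`T_{t₀}u(y₀) = u(x₀) + c_{t₀}(x₀,y₀)`, where `c` is subadditive
(`c_{r+s}(x,z) ≤ c_r(x,y) + c_s(y,z)`). If `γ : [0,t₀] → M` is a minimizer from `x₀` to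
`y₀`, i.e. `c_{t₀}(x₀,y₀) = c_s(x₀,γ(s)) + c_{t-s}(γ(s),γ(t)) + c_{t₀-t}(γ(t),y₀)` for all
`0 ≤ s ≤ t ≤ t₀`, then `T_t u(γ(t)) = T_s u(γ(s)) + c_{t-s}(γ(s),γ(t))` for all
`0 ≤ s ≤ t ≤ t₀`; that is, `γ` is `Tu`-calibrated. -/
theorem calibrated_curve {M : Type*} (c : ℝ → M → M → EReal)
    (hnonneg : ∀ t : ℝ, 0 ≤ t → ∀ x y : M, 0 ≤ c t x y)
    (hsub : ∀ r s : ℝ, 0 ≤ r → 0 ≤ s → ∀ x y z : M,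
      c (r + s) x z ≤ c r x y + c s y z)
    (u : M → EReal) (x₀ y₀ : M) (t₀ : ℝ) (ht₀ : 0 < t₀)
    (hux : ∃ r : ℝ, u x₀ = (r : EReal))
    (hTy : ∃ r : ℝ, laxT c t₀ u y₀ = (r : EReal))
    (hcal : laxT c t₀ u y₀ = laxAdd (u x₀) (c t₀ x₀ y₀))
    (γ : ℝ → M) (hγ0 : γ 0 = x₀) (hγt : γ t₀ = y₀)
    (hmin : ∀ s t : ℝ, 0 ≤ s → s ≤ t → t ≤ t₀ →
      c t₀ x₀ y₀ = c s x₀ (γ s) + c (t - s) (γ s) (γ t) + c (t₀ - t) (γ t) y₀) :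
    ∀ s t : ℝ, 0 ≤ s → s ≤ t → t ≤ t₀ →
      laxT c t u (γ t) = laxAdd (laxT c s u (γ s)) (c (t - s) (γ s) (γ t)) := by
  obtain ⟨r, hr⟩ := hux
  obtain ⟨R, hR⟩ := hTy
  -- C = c t₀ x₀ y₀ is finite
  have hCtop : c t₀ x₀ y₀ ≠ ⊤ := by
    intro h
    rw [laxAdd_of_ne_bot (by rw [hr]; exact EReal.coe_ne_bot r), hr, h] at hcal
    rw [hR] at hcal
    simp [EReal.coe_add_top] at hcal
  obtain ⟨C, hC0, hC⟩ := exists_real_piece (hnonneg t₀ ht₀.le x₀ y₀) hCtop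
  -- c 0 x₀ x₀ = 0
  have hc0 : c 0 x₀ x₀ = 0 := by
    have h := hmin 0 0 le_rfl le_rfl ht₀.le
    rw [hγ0, sub_zero, sub_zero, hC] at h
    have htop : c 0 x₀ x₀ ≠ ⊤ := by
      intro h'
      rw [h', EReal.top_add_top, EReal.top_add_of_ne_bot (EReal.coe_ne_bot C)] at h
      exact EReal.coe_ne_top C h
    obtain ⟨a, ha0, ha⟩ := exists_real_piece (hnonneg 0 le_rfl x₀ x₀) htop
    rw [ha] at h
    rw [ha]
    norm_cast at h ⊢
    linarith
  -- key lemma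
  have key : ∀ t : ℝ, 0 ≤ t → t ≤ t₀ → ∃ e d : ℝ, 0 ≤ e ∧ 0 ≤ d ∧
      c t x₀ (γ t) = (e : EReal) ∧ c (t₀ - t) (γ t) y₀ = (d : EReal) ∧ C = e + d ∧
      laxT c t u (γ t) = u x₀ + (e : EReal) := by
    intro t ht0 htt
    have h := hmin 0 t le_rfl ht0 htt
    rw [hγ0, sub_zero, hc0, zero_add, hC] at h
    -- extract e, d
    have hdne : c (t₀ - t) (γ t) y₀ ≠ ⊥ := ne_of_gt (lt_of_lt_of_le (by simp)
      (hnonneg _ (by linarith) _ _))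
    have hetop : c t x₀ (γ t) ≠ ⊤ := by
      intro h'
      rw [h', EReal.top_add_of_ne_bot hdne] at h
      exact EReal.coe_ne_top C h
    obtain ⟨e, he0, he⟩ := exists_real_piece (hnonneg t ht0 x₀ (γ t)) hetop
    have hdtop : c (t₀ - t) (γ t) y₀ ≠ ⊤ := by
      intro h'
      rw [h', EReal.add_top_of_ne_bot (ne_of_gt (lt_of_lt_of_le (by simp)
        (hnonneg t ht0 x₀ (γ t))))] at h
      exact EReal.coe_ne_top C h
    obtain ⟨d, hd0, hd⟩ := exists_real_piece (hnonneg _ (by linarith) (γ t) y₀) hdtop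
    have hCed : C = e + d := by
      rw [he, hd] at h; exact_mod_cast h
    refine ⟨e, d, he0, hd0, he, hd, hCed, ?_⟩
    rcases eq_or_lt_of_le ht0 with h0 | h0
    · -- t = 0
      subst h0
      rw [hγ0] at he ⊢
      have : e = 0 := by
        rw [hc0] at he; exact_mod_cast he.symm
      simp [laxT, this, hr]
    · rw [laxT, if_neg (ne_of_gt h0)]
      apply le_antisymm
      · calc (⨅ y : M, laxAdd (u y) (c t y (γ t))) ≤ laxAdd (u x₀) (c t x₀ (γ t)) :=
              iInf_le _ x₀
          _ = u x₀ + (e : EReal) := by rw [laxAdd_of_ne_bot (by rw [hr]; exact EReal.coe_ne_bot r), he]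
      · refine le_iInf fun y => ?_
        by_cases huy : u y = ⊥
        · by_cases hcy : c t y (γ t) = ⊤
          · rw [laxAdd, if_pos ⟨huy, hcy⟩]; exact le_top
          · exfalso
            -- laxT t₀ u y₀ = ⊥, contradiction
            have hsub' : c t₀ y y₀ ≤ c t y (γ t) + c (t₀ - t) (γ t) y₀ := by
              have := hsub t (t₀ - t) ht0 (by linarith) y (γ t) y₀
              rwa [add_sub_cancel] at this
            have hctop : c t₀ y y₀ ≠ ⊤ := by
              intro h'
              obtain ⟨cy, _, hcy'⟩ := exists_real_piece (hnonneg t ht0 y (γ t)) hcy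
              rw [h', hcy', hd, ← EReal.coe_add] at hsub'
              exact EReal.coe_ne_top (cy + d) (top_le_iff.mp hsub')
            have : laxT c t₀ u y₀ ≤ ⊥ := by
              rw [laxT, if_neg (ne_of_gt ht₀)]
              refine le_trans (iInf_le _ y) ?_
              rw [laxAdd, if_neg (by tauto), huy, EReal.bot_add]
            rw [hR] at this
            exact absurd (le_bot_iff.mp this) (EReal.coe_ne_bot R)
        · rw [laxAdd_of_ne_bot huy]
          -- R ≤ u y + c t₀ y y₀ ≤ u y + c t y γt + d
          have h1 : (R : EReal) ≤ laxAdd (u y) (c t₀ y y₀) := by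
            rw [← hR, laxT, if_neg (ne_of_gt ht₀)]
            exact iInf_le _ y
          rw [laxAdd_of_ne_bot huy] at h1
          have hsub' : c t₀ y y₀ ≤ c t y (γ t) + c (t₀ - t) (γ t) y₀ := by
            have := hsub t (t₀ - t) ht0 (by linarith) y (γ t) y₀
            rwa [add_sub_cancel] at this
          have h2 : (R : EReal) ≤ (u y + c t y (γ t)) + (d : EReal) := by
            refine h1.trans ?_
            rw [← hd, add_assoc]
            exact add_le_add_right hsub' _
          have hRrCd : (R : EReal) = ((r + e : ℝ) : EReal) + (d : EReal) := by
            have : R = r + C := by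
              rw [laxAdd_of_ne_bot (by rw [hr]; exact EReal.coe_ne_bot r), hr, hC, hR] at hcal
              exact_mod_cast hcal
            rw [this, hCed]; norm_cast; ring
          rw [hRrCd] at h2
          have := (EReal.addLECancellable_coe d).add_le_add_iff_right.mp h2
          rw [hr]
          exact_mod_cast this
  -- main
  intro s t hs hst htt
  obtain ⟨es, ds, hes0, hds0, hes, hds, hCs, hTs⟩ := key s hs (le_trans hst htt)
  obtain ⟨et, dt, het0, hdt0, het, hdt, hCt, hTt⟩ := key t (le_trans hs hst) htt
  -- from hmin s t : C = a + b + dt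
  have h := hmin s t hs hst htt
  rw [hC, hes, hdt] at h
  -- b is finite
  have hbtop : c (t - s) (γ s) (γ t) ≠ ⊤ := by
    intro h'
    rw [h', EReal.add_top_of_ne_bot (EReal.coe_ne_bot es),
      EReal.top_add_of_ne_bot (EReal.coe_ne_bot dt)] at h
    exact EReal.coe_ne_top C h
  obtain ⟨b, hb0, hb⟩ := exists_real_piece (hnonneg _ (by linarith) (γ s) (γ t)) hbtop
  rw [hb] at h
  have hC2 : C = es + b + dt := by exact_mod_cast h
  have hebt : et = es + b := by
    have : C = et + dt := hCt
    linarith [hCs]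
  rw [hTt, hTs, hb, hr]
  rw [laxAdd_of_ne_bot (by norm_cast; exact EReal.coe_ne_bot _)]
  norm_cast
  rw [hebt]; ring
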